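/- In the first Weyl algebra A_1 over a field K of characteristic 0, for any non-constant polynomial f ∈ K[x], the multiplicative set S = {f^i : i ∈ ℕ} satisfies the right Ore condition: for every g ∈ A_1 and every f^k ∈ S, there exist f^ℓ ∈ S and h ∈ A_1 such that g · f^ℓ = f^k · h. -/
import Mathlib

open Polynomial

/-- Left multiplication by any polynomial lies in the Weyl algebra. -/
lemma weyl_mulLeft_mem {K : Type*} [Field K]
    (dop : Module.End K (Polynomial K)) (p : Polynomial K) :
    LinearMap.mulLeft K p ∈
      Algebra.adjoin K {LinearMap.mulLeft K (Polynomial.X : Polynomial K), dop} := by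
  have h1 : LinearMap.mulLeft K p
      = Polynomial.aeval (LinearMap.mulLeft K (Polynomial.X : Polynomial K)) p := by
    have h2 := Polynomial.aeval_algHom_apply (Algebra.lmul K (Polynomial K))
      (Polynomial.X : Polynomial K) p
    have h3 : ∀ q : Polynomial K, Algebra.lmul K (Polynomial K) q
        = LinearMap.mulLeft K q := fun q => rfl
    rw [Polynomial.aeval_X_left_apply, h3, h3] at h2
    exact h2.symm
  rw [h1]
  exact Algebra.adjoin_mono (Set.singleton_subset_iff.2 (Set.mem_insert _ _))
    (Polynomial.aeval_mem_adjoin_singleton K _)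

/-- Commutator of derivative with multiplication by `p`. -/
lemma weyl_deriv_comm {K : Type*} [Field K] (p : Polynomial K) :
    ((Polynomial.derivative : Polynomial K →ₗ[K] Polynomial K) :
        Module.End K (Polynomial K)) * LinearMap.mulLeft K p
      = LinearMap.mulLeft K p *
          ((Polynomial.derivative : Polynomial K →ₗ[K] Polynomial K) :
            Module.End K (Polynomial K))
        + LinearMap.mulLeft K (Polynomial.derivative p) := by
  ext q
  simp [Module.End.mul_apply, Polynomial.derivative_mul]
  ring

/-- In the first Weyl algebra `A₁` over a field of characteristic `0`, realized
faithfully as the subalgebra of `End_K(K[x])` generated by `x` (multiplication by `X`) and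
`∂` (differentiation), for any non-constant `f ∈ K[x]` the multiplicative set
`S = {f^i : i ∈ ℕ}` satisfies the right Ore condition: for every `g ∈ A₁` and every `f^k ∈ S`
there exist `f^ℓ ∈ S` and `h ∈ A₁` with `g · f^ℓ = f^k · h`. -/
theorem weyl_powers_right_ore
    {K : Type*} [Field K] [CharZero K]
    (f : Polynomial K) (hf : f.natDegree ≠ 0)
    (xop dop : Module.End K (Polynomial K))
    (hxop : xop = LinearMap.mulLeft K (Polynomial.X : Polynomial K))
    (hdop : dop = (Polynomial.derivative : Polynomial K →ₗ[K] Polynomial K)) :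
    ∀ g ∈ Algebra.adjoin K {xop, dop}, ∀ k : ℕ,
      ∃ ℓ : ℕ, ∃ h ∈ Algebra.adjoin K {xop, dop},
        g * LinearMap.mulLeft K (f ^ ℓ) = LinearMap.mulLeft K (f ^ k) * h := by
  subst hxop hdop
  set A := Algebra.adjoin K {LinearMap.mulLeft K (Polynomial.X : Polynomial K),
    ((Polynomial.derivative : Polynomial K →ₗ[K] Polynomial K) :
      Module.End K (Polynomial K))} with hA
  set F : ℕ → Module.End K (Polynomial K) := fun m => LinearMap.mulLeft K (f ^ m) with hF
  have hmem : ∀ p : Polynomial K, LinearMap.mulLeft K p ∈ A := fun p => weyl_mulLeft_mem _ p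
  have key : ∀ p q : Polynomial K, LinearMap.mulLeft K (p * q)
      = LinearMap.mulLeft K p * LinearMap.mulLeft K q := by
    intro p q; ext r; simp [Module.End.mul_apply, mul_assoc]
  have hFmul : ∀ a b : ℕ, F (a + b) = F a * F b := by
    intro a b
    show LinearMap.mulLeft K (f ^ (a + b))
      = LinearMap.mulLeft K (f ^ a) * LinearMap.mulLeft K (f ^ b)
    rw [pow_add]; exact key _ _
  -- shifting lemma
  have hshift : ∀ (g : Module.End K (Polynomial K)) (k ℓ m : ℕ)
      (h : Module.End K (Polynomial K)),
      g * F ℓ = F k * h → g * F (ℓ + m) = F k * (h * F m) := by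
    intro g k ℓ m h hh
    rw [hFmul, ← mul_assoc, hh, mul_assoc]
  intro g hg k
  induction hg using Algebra.adjoin_induction generalizing k with
  | mem y hy =>
    rcases hy with rfl | rfl
    · -- y = xop, commutes with F k
      refine ⟨k, LinearMap.mulLeft K (Polynomial.X : Polynomial K),
        Algebra.subset_adjoin (Set.mem_insert _ _), ?_⟩
      show LinearMap.mulLeft K (Polynomial.X : Polynomial K) * LinearMap.mulLeft K (f ^ k) = _
      rw [← key, ← key, mul_comm]
    · -- y = dop
      refine ⟨k + 1, LinearMap.mulLeft K f *
        ((Polynomial.derivative : Polynomial K →ₗ[K] Polynomial K) :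
          Module.End K (Polynomial K))
        + LinearMap.mulLeft K (Polynomial.C ((k : K) + 1) * Polynomial.derivative f),
        ?_, ?_⟩
      · exact add_mem (mul_mem (hmem f)
          (Algebra.subset_adjoin (Set.mem_insert_of_mem _ rfl))) (hmem _)
      · have h1 := weyl_deriv_comm (p := f ^ (k + 1))
        show _ * F (k+1) = F k * _
        rw [show F (k+1) = LinearMap.mulLeft K (f ^ (k+1)) from rfl, h1]
        rw [mul_add]
        congr 1
        · rw [← mul_assoc]
          congr 1
          show _ = LinearMap.mulLeft K (f ^ k) * LinearMap.mulLeft K f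
          rw [← key, ← pow_succ]
        · show LinearMap.mulLeft K (Polynomial.derivative (f ^ (k+1)))
            = LinearMap.mulLeft K (f ^ k) * LinearMap.mulLeft K _
          rw [← key]
          congr 1
          rw [Polynomial.derivative_pow]
          push_cast
          ring
  | algebraMap r =>
    exact ⟨k, algebraMap K _ r, Subalgebra.algebraMap_mem _ r,
      Algebra.commutes r (LinearMap.mulLeft K (f ^ k))⟩
  | add x y hx hy ihx ihy =>
    obtain ⟨ℓ₁, h₁, h₁mem, e₁⟩ := ihx k
    obtain ⟨ℓ₂, h₂, h₂mem, e₂⟩ := ihy k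
    refine ⟨max ℓ₁ ℓ₂, h₁ * F (max ℓ₁ ℓ₂ - ℓ₁) + h₂ * F (max ℓ₁ ℓ₂ - ℓ₂),
      add_mem (mul_mem h₁mem (hmem _)) (mul_mem h₂mem (hmem _)), ?_⟩
    have e₁' := hshift x k ℓ₁ (max ℓ₁ ℓ₂ - ℓ₁) h₁ e₁
    have e₂' := hshift y k ℓ₂ (max ℓ₁ ℓ₂ - ℓ₂) h₂ e₂
    rw [Nat.add_sub_cancel' (le_max_left ℓ₁ ℓ₂)] at e₁'
    rw [Nat.add_sub_cancel' (le_max_right ℓ₁ ℓ₂)] at e₂'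
    rw [add_mul, e₁', e₂', mul_add]
  | mul x y hx hy ihx ihy =>
    obtain ⟨ℓ₁, h₁, h₁mem, e₁⟩ := ihx k
    obtain ⟨ℓ₂, h₂, h₂mem, e₂⟩ := ihy ℓ₁
    refine ⟨ℓ₂, h₁ * h₂, mul_mem h₁mem h₂mem, ?_⟩
    calc x * y * F ℓ₂ = x * (y * F ℓ₂) := mul_assoc _ _ _
    _ = x * (F ℓ₁ * h₂) := by rw [e₂]
    _ = (x * F ℓ₁) * h₂ := (mul_assoc _ _ _).symm
    _ = F k * (h₁ * h₂) := by rw [e₁, mul_assoc]
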